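/- arXiv:1410.7049 — 2 statements merged into one kernel-verified Lean document; each statement's English description precedes it below -/
import Mathlib

section
/- Every tournament on n ≥ 1 vertices contains a transitive subtournament of size at least log₂(n) (equivalently, of size at least ⌊log₂ n⌋ + 1). -/
open Finset

structure Tournament (V : Type*) where
  adj : V → V → Prop
  irrefl : ∀ v, ¬ adj v v
  asymm : ∀ u v, adj u v → ¬ adj v u
  total : ∀ u v, u ≠ v → adj u v ∨ adj v u

namespace Tournament

variable {V : Type*} [Fintype V] [DecidableEq V]

open Classical in
/-- number of directed edges from `X` to `Y` -/
noncomputable def e (T : Tournament V) (X Y : Finset V) : ℕ :=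
  ((X ×ˢ Y).filter fun p => T.adj p.1 p.2).card

/-- directed density from `X` to `Y` -/
noncomputable def density (T : Tournament V) (X Y : Finset V) : ℝ :=
  (T.e X Y : ℝ) / ((X.card : ℝ) * (Y.card : ℝ))

/-- `S` induces a transitive subtournament -/
def IsTransSet (T : Tournament V) (S : Finset V) : Prop :=
  ∀ a ∈ S, ∀ b ∈ S, ∀ c ∈ S, T.adj a b → T.adj b c → T.adj a c

open Classical in
/-- size of the largest transitive subtournament -/
noncomputable def tr (T : Tournament V) : ℕ :=
  Finset.sup ((Finset.univ : Finset (Finset V)).filter fun S => T.IsTransSet S) Finset.card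

/-- `T` contains a copy of `H` -/
def HasCopy {W : Type*} (T : Tournament V) (H : Tournament W) : Prop :=
  ∃ f : W ↪ V, ∀ a b, H.adj a b → T.adj (f a) (f b)

end Tournament

open Classical in
theorem tourn_aux {V : Type*} [DecidableEq V] (T : Tournament V) :
    ∀ k (S : Finset V), S.card = k → S.Nonempty →
      ∃ A, A ⊆ S ∧ T.IsTransSet A ∧ Nat.log 2 S.card + 1 ≤ A.card := by
  intro k
  induction k using Nat.strong_induction_on with
  | _ k ih =>
  intro S hcard hne
  obtain ⟨v, hv⟩ := hne
  by_cases h1 : S.card ≤ 1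
  · refine ⟨{v}, by simpa using hv, ?_, ?_⟩
    · intro a ha b hb c hc hab _
      simp only [mem_singleton] at ha hb
      exact absurd hab (ha ▸ hb ▸ T.irrefl v)
    · have hs1 : S.card = 1 := le_antisymm h1 (card_pos.2 ⟨v, hv⟩)
      simp [hs1]
  push_neg at h1
  set Out := S.filter (fun u => T.adj v u) with hOut
  set Inn := S.filter (fun u => T.adj u v) with hInn
  have hsplit : Out.card + Inn.card = S.card - 1 := by
    have hd : Disjoint Out Inn := by
      simp only [disjoint_filter, hOut, hInn]
      intro x _ hx hx'
      exact T.asymm v x hx hx'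
    have hu : Out ∪ Inn = S.erase v := by
      ext x
      simp only [mem_union, mem_filter, mem_erase, hOut, hInn]
      constructor
      · rintro (⟨hx, ha⟩ | ⟨hx, ha⟩)
        · exact ⟨fun he => T.irrefl v (he ▸ ha), hx⟩
        · exact ⟨fun he => T.irrefl v (he ▸ ha), hx⟩
      · rintro ⟨hne, hx⟩
        rcases T.total v x (Ne.symm hne) with h | h
        · exact Or.inl ⟨hx, h⟩
        · exact Or.inr ⟨hx, h⟩
    rw [← card_union_of_disjoint hd, hu, card_erase_of_mem hv]
  have hhalf : S.card / 2 ≤ Out.card ∨ S.card / 2 ≤ Inn.card := by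
    by_contra hc
    push_neg at hc
    omega
  have hlog : Nat.log 2 (S.card / 2) + 1 = Nat.log 2 S.card := by
    have h2 : 2 ≤ S.card := h1
    have := Nat.log_div_base 2 S.card
    have hp : 0 < Nat.log 2 S.card := Nat.log_pos (by norm_num) h2
    omega
  -- helper: given W ⊆ S \ {v} with all edges between v and W in a consistent direction
  have key : ∀ W : Finset V, W ⊆ S → v ∉ W → S.card / 2 ≤ W.card →
      ((∀ u ∈ W, T.adj v u) ∨ (∀ u ∈ W, T.adj u v)) →
      ∃ A, A ⊆ S ∧ T.IsTransSet A ∧ Nat.log 2 S.card + 1 ≤ A.card := by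
    intro W hWS hvW hWcard hdir
    have hWne : W.Nonempty := by
      rw [← card_pos]
      have : 0 < S.card / 2 := by omega
      omega
    have hWlt : W.card < k := by
      have : W.card ≤ S.card - 1 := by
        calc W.card ≤ (S.erase v).card := card_le_card (fun x hx =>
          mem_erase.2 ⟨fun he => hvW (he ▸ hx), hWS hx⟩)
        _ = S.card - 1 := card_erase_of_mem hv
      omega
    obtain ⟨A, hAW, hAtrans, hAcard⟩ := ih W.card hWlt W rfl hWne
    have hvA : v ∉ A := fun h => hvW (hAW h)
    refine ⟨insert v A, ?_, ?_, ?_⟩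
    · exact insert_subset hv (hAW.trans hWS)
    · intro a ha b hb c hc hab hbc
      rcases mem_insert.1 ha with h | ha'
      · subst h
        rcases mem_insert.1 hc with h' | hc'
        · subst h'
          exact absurd hbc (T.asymm _ _ hab)
        · rcases hdir with hd | hd
          · exact hd c (hAW hc')
          · rcases mem_insert.1 hb with h' | hb'
            · subst h'
              exact absurd hab (T.irrefl _)
            · exact absurd hab (T.asymm b a (hd b (hAW hb')))
      · rcases mem_insert.1 hc with h | hc'
        · subst h
          rcases hdir with hd | hd
          · rcases mem_insert.1 hb with h' | hb'
            · subst h'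
              exact absurd hbc (T.irrefl _)
            · exact absurd hbc (T.asymm c b (hd b (hAW hb')))
          · exact hd a (hAW ha')
        · rcases mem_insert.1 hb with h | hb'
          · subst h
            rcases hdir with hd | hd
            · exact absurd hab (T.asymm b a (hd a (hAW ha')))
            · exact absurd hbc (T.asymm c b (hd c (hAW hc')))
          · exact hAtrans a ha' b hb' c hc' hab hbc
    · rw [card_insert_of_notMem hvA]
      have : Nat.log 2 (S.card / 2) ≤ Nat.log 2 W.card :=
        Nat.log_mono_right hWcard
      omega
  rcases hhalf with h | h
  · exact key Out (filter_subset _ _) (by simp [hOut, T.irrefl v])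
      h (Or.inl fun u hu => (mem_filter.1 hu).2)
  · exact key Inn (filter_subset _ _) (by simp [hInn, T.irrefl v])
      h (Or.inr fun u hu => (mem_filter.1 hu).2)

open Tournament in
theorem stmt_2 (n : ℕ) (hn : 1 ≤ n) (T : Tournament (Fin n)) :
    Nat.log 2 n + 1 ≤ T.tr := by
  classical
  obtain ⟨A, _, hAtrans, hAcard⟩ := tourn_aux T n (Finset.univ : Finset (Fin n))
    (by simp) (by rw [Finset.univ_nonempty_iff]; exact ⟨⟨0, hn⟩⟩)
  calc Nat.log 2 n + 1 ≤ A.card := by simpa using hAcard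
    _ ≤ T.tr := Finset.le_sup (by simp [hAtrans])
end

section
/- Let ε > 0 and suppose that for every H-free tournament S on fewer than n vertices one has tr(S) ≥ |S|^ε. Let T be an H-free tournament on n vertices containing disjoint vertex sets A, B with d(A,B) = 1, |A| ≥ c·n, B transitive with |B| ≥ c·tr(T), where 0 < c < 1 and ε ≤ log_c(1-c). Then tr(T) ≥ n^ε. -/
open Finset

namespace Tournament

variable {V : Type*} [Fintype V] [DecidableEq V]

lemma card_le_tr (T : Tournament V) {S : Finset V} (hS : T.IsTransSet S) :
    S.card ≤ T.tr := by
  classical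
  apply Finset.le_sup
  simp only [Finset.mem_filter, Finset.mem_univ, true_and]
  exact hS

lemma exists_tr_set (T : Tournament V) :
    ∃ S : Finset V, T.IsTransSet S ∧ S.card = T.tr := by
  classical
  obtain ⟨S, hS, h⟩ := Finset.exists_mem_eq_sup
    ((Finset.univ : Finset (Finset V)).filter fun S => T.IsTransSet S)
    ⟨∅, Finset.mem_filter.2 ⟨Finset.mem_univ _, fun a ha => absurd ha (Finset.notMem_empty a)⟩⟩ Finset.card
  rw [Finset.mem_filter] at hS
  exact ⟨S, hS.2, by rw [tr]; convert h.symm⟩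

end Tournament

open Tournament in
theorem stmt_4 {W : Type*} (H : Tournament W) (n : ℕ) (T : Tournament (Fin n))
    (ε c : ℝ) (hε : 0 < ε) (hc0 : 0 < c) (hc1 : c < 1)
    (hεc : ε ≤ Real.logb c (1 - c))
    (hind : ∀ m : ℕ, m < n → ∀ S : Tournament (Fin m),
      ¬ S.HasCopy H → (m : ℝ) ^ ε ≤ (S.tr : ℝ))
    (hfree : ¬ T.HasCopy H)
    (A B : Finset (Fin n)) (hAB : Disjoint A B)
    (hdens : T.density A B = 1)
    (hA : c * (n : ℝ) ≤ (A.card : ℝ))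
    (hBtrans : T.IsTransSet B)
    (hB : c * (T.tr : ℝ) ≤ (B.card : ℝ)) :
    (n : ℝ) ^ ε ≤ (T.tr : ℝ) := by
  classical
  -- A and B are nonempty
  have hA0 : 0 < A.card := by
    rcases Nat.eq_zero_or_pos A.card with h | h
    · exfalso
      rw [Tournament.density, h] at hdens
      norm_num at hdens
    · exact h
  have hB0 : 0 < B.card := by
    rcases Nat.eq_zero_or_pos B.card with h | h
    · exfalso
      rw [Tournament.density, h] at hdens
      norm_num at hdens
    · exact h
  -- all edges go from A to B
  have hcard : (T.e A B : ℝ) = (A.card : ℝ) * (B.card : ℝ) := by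
    have hne : ((A.card : ℝ) * (B.card : ℝ)) ≠ 0 := by positivity
    rw [Tournament.density, div_eq_one_iff_eq hne] at hdens
    exact hdens
  have hcardN : T.e A B = A.card * B.card := by exact_mod_cast hcard
  have hedge : ∀ a ∈ A, ∀ b ∈ B, T.adj a b := by
    have hsub : ((A ×ˢ B).filter fun p => T.adj p.1 p.2) ⊆ A ×ˢ B :=
      Finset.filter_subset _ _
    have heq : ((A ×ˢ B).filter fun p => T.adj p.1 p.2) = A ×ˢ B := by
      apply Finset.eq_of_subset_of_card_le hsub
      rw [Finset.card_product]
      have : ((A ×ˢ B).filter fun p => T.adj p.1 p.2).card = A.card * B.card := by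
        have := hcardN
        rw [Tournament.e] at this
        convert this using 2
      omega
    intro a ha b hb
    have hmem : (a, b) ∈ A ×ˢ B := Finset.mem_product.2 ⟨ha, hb⟩
    rw [← heq] at hmem
    exact (Finset.mem_filter.1 hmem).2
  -- the induced tournament on A
  set m := A.card with hm
  let f : Fin m ↪ Fin n := (A.orderEmbOfFin rfl).toEmbedding
  have hfA : ∀ i, f i ∈ A := fun i => A.orderEmbOfFin_mem rfl i
  let S' : Tournament (Fin m) :=
    { adj := fun i j => T.adj (f i) (f j)
      irrefl := fun i => T.irrefl _
      asymm := fun i j h => T.asymm _ _ h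
      total := fun i j hij => T.total _ _ fun h => hij (f.injective h) }
  have hS'free : ¬ S'.HasCopy H := by
    rintro ⟨g, hg⟩
    exact hfree ⟨g.trans f, fun a b h => hg a b h⟩
  have hmn : m < n := by
    have h1 : A.card + B.card ≤ n := by
      rw [← Finset.card_union_of_disjoint hAB]
      simpa using Finset.card_le_univ (A ∪ B)
    omega
  have hindA : (m : ℝ) ^ ε ≤ (S'.tr : ℝ) := hind m hmn S' hS'free
  -- a transitive set of size tr S' inside A
  obtain ⟨S₀, hS₀trans, hS₀card⟩ := S'.exists_tr_set
  set S₁ : Finset (Fin n) := S₀.map f with hS₁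
  have hS₁A : S₁ ⊆ A := by
    intro x hx
    obtain ⟨i, _, rfl⟩ := Finset.mem_map.1 hx
    exact hfA i
  have hS₁card : S₁.card = S'.tr := by rw [hS₁, Finset.card_map, hS₀card]
  -- S₁ ∪ B is transitive
  have htrans : T.IsTransSet (S₁ ∪ B) := by
    intro a ha b hb x hx hab hbx
    rcases Finset.mem_union.1 ha with haS | haB
    · rcases Finset.mem_union.1 hx with hxS | hxB
      · rcases Finset.mem_union.1 hb with hbS | hbB
        · obtain ⟨i, hi, rfl⟩ := Finset.mem_map.1 haS
          obtain ⟨j, hj, rfl⟩ := Finset.mem_map.1 hbS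
          obtain ⟨k, hk, rfl⟩ := Finset.mem_map.1 hxS
          exact hS₀trans i hi j hj k hk hab hbx
        · exact absurd hbx (T.asymm _ _ (hedge _ (hS₁A hxS) _ hbB))
      · exact hedge _ (hS₁A haS) _ hxB
    · rcases Finset.mem_union.1 hb with hbS | hbB
      · exact absurd hab (T.asymm _ _ (hedge _ (hS₁A hbS) _ haB))
      · rcases Finset.mem_union.1 hx with hxS | hxB
        · exact absurd hbx (T.asymm _ _ (hedge _ (hS₁A hxS) _ hbB))
        · exact hBtrans a haB b hbB x hxB hab hbx
  have hdisj : Disjoint S₁ B := Finset.disjoint_of_subset_left hS₁A hAB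
  have hkey : S₁.card + B.card ≤ T.tr := by
    have := T.card_le_tr htrans
    rwa [Finset.card_union_of_disjoint hdisj] at this
  -- arithmetic
  have hnpos : (0:ℝ) < n := by exact_mod_cast Nat.pos_of_ne_zero (by omega)
  have hm_le : (c * n : ℝ) ^ ε ≤ (m : ℝ) ^ ε :=
    Real.rpow_le_rpow (by positivity) hA hε.le
  have hceps : (1 - c) ≤ c ^ ε := by
    have h1 : c ^ Real.logb c (1 - c) ≤ c ^ ε :=
      Real.rpow_le_rpow_of_exponent_ge hc0 hc1.le hεc
    rwa [Real.rpow_logb hc0 hc1.ne (by linarith)] at h1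
  have hexp : (c * n : ℝ) ^ ε = c ^ ε * (n : ℝ) ^ ε :=
    Real.mul_rpow hc0.le (by positivity)
  have ht : (c * n : ℝ) ^ ε + c * (T.tr : ℝ) ≤ (T.tr : ℝ) := by
    have h1 : (S₁.card : ℝ) + (B.card : ℝ) ≤ (T.tr : ℝ) := by exact_mod_cast hkey
    have h2 : (c * n : ℝ) ^ ε ≤ (S₁.card : ℝ) := by
      rw [hS₁card]; exact le_trans hm_le hindA
    linarith
  have hfin : (1 - c) * (n : ℝ) ^ ε ≤ (1 - c) * (T.tr : ℝ) := by
    have h3 : (1 - c) * (n:ℝ) ^ ε ≤ c ^ ε * (n:ℝ) ^ ε :=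
      mul_le_mul_of_nonneg_right hceps (by positivity)
    nlinarith [ht, hexp]
  exact le_of_mul_le_mul_left hfin (by linarith)
end
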